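/- Let G be a group acting on a type α and let ⫶ be a ternary relation on subsets of α satisfying invariance and monotonicity. Define A ⫶*_C B iff for every B̂ ⊇ B there exists A' ≡_{B∪C} A with A' ⫶_C B̂. Then ⫶* satisfies invariance and monotonicity; moreover, if ⫶ additionally satisfies base monotonicity then so does ⫶*, if ⫶ additionally satisfies transitivity then so does ⫶*, and if ⫶ additionally satisfies normality then so does ⫶*. -/
import Mathlib


open scoped Pointwise

/-- The relation `⫶*` derived from `⫶`: `A ⫶*_C B` iff for every `B̂ ⊇ B`
there is `A' ≡_{B∪C} A` with `A' ⫶_C B̂`. -/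
def indStar {α : Type*} (G : Type*) [Group G] [MulAction G α]
    (ind : Set α → Set α → Set α → Prop) (A C B : Set α) : Prop :=
  ∀ Bhat : Set α, B ⊆ Bhat →
    ∃ (A' : Set α) (g : G), (∀ x ∈ B ∪ C, g • x = x) ∧ g • A = A' ∧ ind A' C Bhat

private lemma smul_set_eq_of_fix {α G : Type*} [Group G] [MulAction G α] (g : G) {S : Set α}
    (h : ∀ x ∈ S, g • x = x) : g • S = S := by
  ext x
  constructor
  · rintro ⟨y, hy, rfl⟩
    show g • y ∈ S
    rwa [h y hy]
  · intro hx; exact ⟨x, hx, h x hx⟩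

private lemma indStar_inv {α G : Type*} [Group G] [MulAction G α]
    (ind : Set α → Set α → Set α → Prop)
    (inv : ∀ (g : G) (A B C : Set α), ind A C B → ind (g • A) (g • C) (g • B))
    (g : G) (A B C : Set α) (h : indStar G ind A C B) :
    indStar G ind (g • A) (g • C) (g • B) := by
  intro Bh hBh
  have hsub : B ⊆ g⁻¹ • Bh := by
    intro x hx
    rw [Set.mem_inv_smul_set_iff]
    exact hBh ⟨x, hx, rfl⟩
  obtain ⟨A', k, hfix, hAA', hind⟩ := h (g⁻¹ • Bh) hsub
  refine ⟨g • A', g * k * g⁻¹, ?_, ?_, ?_⟩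
  · intro x hx
    have : x ∈ g • (B ∪ C) := by rwa [Set.smul_set_union]
    obtain ⟨y, hy, rfl⟩ := this
    show (g * k * g⁻¹) • g • y = g • y
    rw [mul_smul, mul_smul, inv_smul_smul, hfix y hy]
  · rw [mul_smul, mul_smul, inv_smul_smul, hAA']
  · have := inv g _ _ _ hind
    rwa [smul_inv_smul] at this

/-- Lemma on derived forking: if `⫶` satisfies invariance and monotonicity then
`⫶*` satisfies invariance and monotonicity; moreover base monotonicity, transitivity and
normality are each inherited by `⫶*` from `⫶`. -/
theorem stmt_2 {α G : Type*} [Group G] [MulAction G α]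
    (ind : Set α → Set α → Set α → Prop)
    (inv : ∀ (g : G) (A B C : Set α), ind A C B → ind (g • A) (g • C) (g • B))
    (mono : ∀ A B C A' B' : Set α, ind A C B → A' ⊆ A → B' ⊆ B → ind A' C B') :
    ((∀ (g : G) (A B C : Set α),
        indStar G ind A C B → indStar G ind (g • A) (g • C) (g • B)) ∧
     (∀ A B C A' B' : Set α,
        indStar G ind A C B → A' ⊆ A → B' ⊆ B → indStar G ind A' C B')) ∧
    ((∀ A B C D : Set α, D ⊆ C → C ⊆ B → ind A D B → ind A C B) →
      ∀ A B C D : Set α, D ⊆ C → C ⊆ B → indStar G ind A D B → indStar G ind A C B) ∧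
    ((∀ A B C D : Set α, D ⊆ C → C ⊆ B → ind B C A → ind C D A → ind B D A) →
      ∀ A B C D : Set α, D ⊆ C → C ⊆ B →
        indStar G ind B C A → indStar G ind C D A → indStar G ind B D A) ∧
    ((∀ A B C : Set α, ind A C B → ind (A ∪ C) C B) →
      ∀ A B C : Set α, indStar G ind A C B → indStar G ind (A ∪ C) C B) := by
  refine ⟨⟨indStar_inv ind inv, ?_⟩, ?_, ?_, ?_⟩
  · -- monotonicity
    intro A B C A' B' h hA' hB' Bh hBh
    obtain ⟨A₀, g, hfix, hgA, hind⟩ := h (Bh ∪ B) Set.subset_union_right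
    refine ⟨g • A', g, ?_, rfl, ?_⟩
    · exact fun x hx => hfix x (Set.union_subset_union_left C hB' hx)
    · refine mono A₀ (Bh ∪ B) C (g • A') Bh ?_ ?_ Set.subset_union_left
      · exact hind
      · rw [← hgA]; exact Set.smul_set_mono hA'
  · -- base monotonicity
    intro base A B C D hDC hCB h Bh hBh
    obtain ⟨A', g, hfix, hgA, hind⟩ := h Bh hBh
    refine ⟨A', g, ?_, hgA, base A' Bh C D hDC (hCB.trans hBh) hind⟩
    · intro x hx
      rcases hx with hx | hx
      · exact hfix x (Or.inl hx)
      · exact hfix x (Or.inl (hCB hx))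
  · -- transitivity
    intro trans A B C D hDC hCB hBC hCD Ah hAh
    obtain ⟨C', g, hgfix, hgC, hindC⟩ := hCD Ah hAh
    subst hgC
    have hBC' : indStar G ind (g • B) (g • C) A := by
      have := indStar_inv ind inv g B A C hBC
      rwa [smul_set_eq_of_fix g (fun x hx => hgfix x (Or.inl hx))] at this
    obtain ⟨B', k, hkfix, hkB, hindB⟩ := hBC' Ah hAh
    have hDgC : D ⊆ g • C := by
      intro x hx
      have : g • x = x := hgfix x (Or.inr hx)
      exact ⟨x, hDC hx, this⟩
    refine ⟨B', k * g, ?_, ?_, ?_⟩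
    · intro x hx
      rw [mul_smul]
      rcases hx with hx | hx
      · rw [hgfix x (Or.inl hx)]; exact hkfix x (Or.inl hx)
      · rw [hgfix x (Or.inr hx)]
        exact hkfix x (Or.inr (hDgC hx))
    · rw [mul_smul]
      rw [← hkB]
    · refine trans Ah B' (g • C) D hDgC ?_ ?_ hindC
      · -- g • C ⊆ B'
        intro x hx
        have h1 : k • x = x := hkfix x (Or.inr hx)
        rw [← hkB]
        obtain ⟨y, hy, rfl⟩ := hx
        exact ⟨g • y, Set.smul_set_mono hCB ⟨y, hy, rfl⟩, h1⟩
      · exact hindB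
  · -- normality
    intro norm A B C h Bh hBh
    obtain ⟨A', g, hfix, hgA, hind⟩ := h Bh hBh
    have hC : g • C = C := smul_set_eq_of_fix g (fun x hx => hfix x (Or.inr hx))
    refine ⟨A' ∪ C, g, hfix, ?_, norm A' Bh C hind⟩
    rw [Set.smul_set_union, hgA, hC]
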